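/- Let K be a max cone in ℝ≥0^n. If D_j(u) has a minimal element for each u ∈ K and each j ∈ supp(u), then K is generated by its set of extremals. -/

import Mathlib

open scoped NNReal

set_option maxHeartbeats 1000000
set_option synthInstance.maxHeartbeats 400000

/-- The max-algebraic span of `S`: all vectors `⨆_{x ∈ S} λ_x • x` where only
finitely many coefficients `λ_x` are nonzero (`MaxSpan ∅ = {0}`). -/
def MaxSpan {n : ℕ} (S : Set (Fin n → ℝ≥0)) : Set (Fin n → ℝ≥0) :=
  {u | ∃ (F : Finset (Fin n → ℝ≥0)) (lam : (Fin n → ℝ≥0) → ℝ≥0),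
    ↑F ⊆ S ∧ u = F.sup (fun x => lam x • x)}

/-- A max cone: a subset of `ℝ≥0ⁿ` closed under pointwise max `⊔` and under
multiplication by nonnegative scalars. -/
def MaxCone {n : ℕ} (K : Set (Fin n → ℝ≥0)) : Prop :=
  0 ∈ K ∧ (∀ x ∈ K, ∀ y ∈ K, x ⊔ y ∈ K) ∧ (∀ (c : ℝ≥0), ∀ x ∈ K, c • x ∈ K)

/-- `u` is an extremal in `K` if `u = v ⊔ w` with `v, w ∈ K` implies `u = v` or `u = w`. -/
def IsExtremal {n : ℕ} (K : Set (Fin n → ℝ≥0)) (u : Fin n → ℝ≥0) : Prop :=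
  u ∈ K ∧ ∀ v ∈ K, ∀ w ∈ K, u = v ⊔ w → u = v ∨ u = w

/-- A vector is scaled if its max norm `⨆ i, x i` equals `1`. -/
def Scaled {n : ℕ} (x : Fin n → ℝ≥0) : Prop := (⨆ i, x i) = 1

/-- The support of a vector. -/
def supp {n : ℕ} (v : Fin n → ℝ≥0) : Set (Fin n) := {j | 0 < v j}

/-- For `j ∈ supp u`, `rescale u j = (1 / u j) • u`, the `j`-scaling `u(j)`. -/
noncomputable def rescale {n : ℕ} (u : Fin n → ℝ≥0) (j : Fin n) : Fin n → ℝ≥0 :=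
  (u j)⁻¹ • u

/-- `T(j) = {u(j) : u ∈ T, j ∈ supp u}`. -/
noncomputable def setScale {n : ℕ} (T : Set (Fin n → ℝ≥0)) (j : Fin n) :
    Set (Fin n → ℝ≥0) :=
  {y | ∃ u ∈ T, j ∈ supp u ∧ y = rescale u j}

/-- `u` is minimal in `T` if `v ∈ T` and `v ≤ u` imply `v = u`. -/
def MinimalIn {n : ℕ} (T : Set (Fin n → ℝ≥0)) (u : Fin n → ℝ≥0) : Prop :=
  u ∈ T ∧ ∀ v ∈ T, v ≤ u → v = u

/-- A set is totally dependent if each of its elements is a max combination of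
the remaining ones. -/
def TotallyDependent {n : ℕ} (S : Set (Fin n → ℝ≥0)) : Prop :=
  ∀ x ∈ S, x ∈ MaxSpan (S \ {x})

/-- A set is independent if none of its elements is a max combination of
the remaining ones. -/
def IndependentSet {n : ℕ} (S : Set (Fin n → ℝ≥0)) : Prop :=
  ∀ x ∈ S, x ∉ MaxSpan (S \ {x})

/-- A basis for `K` is an independent set of generators for `K`. -/
def IsBasis {n : ℕ} (S K : Set (Fin n → ℝ≥0)) : Prop :=
  IndependentSet S ∧ MaxSpan S = K

/-- if for each `u ∈ K` and `j ∈ supp u` the set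
`D_j(u) = {v ∈ K(j) : v ≤ u(j)}` has a minimal element, then the max cone `K`
is generated by its extremals. -/

lemma smul_sup' {n : ℕ} (c : ℝ≥0) (v w : Fin n → ℝ≥0) : c • (v ⊔ w) = c • v ⊔ c • w := by
  funext i
  simp only [Pi.smul_apply, Pi.sup_apply, smul_eq_mul]
  rcases le_total (v i) (w i) with h | h
  · rw [max_eq_right h, max_eq_right (mul_le_mul_right h c)]
  · rw [max_eq_left h, max_eq_left (mul_le_mul_right h c)]

lemma extremal_smul {n : ℕ} {K : Set (Fin n → ℝ≥0)} (hK : MaxCone K) {c : ℝ≥0} (hc : c ≠ 0)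
    {x : Fin n → ℝ≥0} (hx : IsExtremal K x) : IsExtremal K (c • x) := by
  refine ⟨hK.2.2 c x hx.1, ?_⟩
  intro v hv w hw heq
  have hx' : x = c⁻¹ • v ⊔ c⁻¹ • w := by
    have := congrArg (fun z => c⁻¹ • z) heq
    simpa [smul_smul, inv_mul_cancel₀ hc, smul_sup'] using this
  rcases hx.2 _ (hK.2.2 c⁻¹ v hv) _ (hK.2.2 c⁻¹ w hw) hx' with h | h
  · left; rw [h, smul_smul, mul_inv_cancel₀ hc, one_smul]
  · right; rw [h, smul_smul, mul_inv_cancel₀ hc, one_smul]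

theorem stmt6 {n : ℕ} (K : Set (Fin n → ℝ≥0)) (hK : MaxCone K)
    (h : ∀ u ∈ K, ∀ j ∈ supp u,
      ∃ m, MinimalIn {v ∈ setScale K j | v ≤ rescale u j} m) :
    MaxSpan {x | IsExtremal K x} = K := by
  apply Set.Subset.antisymm
  · rintro u ⟨F, lam, hF, rfl⟩
    refine Finset.sup_induction ?_ (fun a ha b hb => hK.2.1 a ha b hb) ?_
    · have : (⊥ : Fin n → ℝ≥0) = 0 := rfl
      rw [this]; exact hK.1
    · intro x hxF
      exact hK.2.2 (lam x) x (hF hxF).1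
  · intro u hu
    classical
    -- choose minimal elements
    have hch : ∀ j, 0 < u j → ∃ m, MinimalIn {v ∈ setScale K j | v ≤ rescale u j} m :=
      fun j hj => h u hu j hj
    choose m0 hm0 using hch
    set m : Fin n → (Fin n → ℝ≥0) := fun j => if hj : 0 < u j then m0 j hj else 0 with hm
    have hmspec : ∀ j, 0 < u j → MinimalIn {v ∈ setScale K j | v ≤ rescale u j} (m j) := by
      intro j hj; simp only [hm, dif_pos hj]; exact hm0 j hj
    have hmem : ∀ j, 0 < u j → m j ∈ setScale K j ∧ m j ≤ rescale u j := by
      intro j hj; exact (hmspec j hj).1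
    have hmj : ∀ j (hj : 0 < u j), m j j = 1 := by
      intro j hj
      obtain ⟨⟨w, hwK, hwj, hweq⟩, -⟩ := hmem j hj
      rw [hweq]
      simp only [rescale, Pi.smul_apply, smul_eq_mul]
      exact inv_mul_cancel₀ (ne_of_gt hwj)
    have hmK : ∀ j, 0 < u j → m j ∈ K := by
      intro j hj
      obtain ⟨⟨w, hwK, hwj, hweq⟩, -⟩ := hmem j hj
      rw [hweq]; exact hK.2.2 _ w hwK
    have hmle : ∀ j (hj : 0 < u j) (i : Fin n), m j i ≤ (u j)⁻¹ * u i := by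
      intro j hj i
      have := (hmem j hj).2 i
      simpa [rescale] using this
    -- extremality of m j
    have hext : ∀ j, 0 < u j → IsExtremal K (m j) := by
      intro j hj
      refine ⟨hmK j hj, ?_⟩
      intro v hv w hw heq
      have hjv : max (v j) (w j) = 1 := by
        have := congrFun heq j
        rw [hmj j hj] at this
        exact this.symm
      have key : ∀ z, z ∈ K → z ≤ m j → z j = 1 → m j = z := by
        intro z hzK hzle hzj
        have hz1 : z ∈ setScale K j := by
          refine ⟨z, hzK, by simp [supp, hzj], ?_⟩
          simp [rescale, hzj]
        have hz2 : z ≤ rescale u j := le_trans hzle (hmem j hj).2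
        exact ((hmspec j hj).2 z ⟨hz1, hz2⟩ hzle).symm
      rcases max_cases (v j) (w j) with ⟨h1, -⟩ | ⟨h1, -⟩
      · left; exact key v hv (heq ▸ le_sup_left) (h1 ▸ hjv)
      · right; exact key w hw (heq ▸ le_sup_right) (h1 ▸ hjv)
    -- build the finset
    set s : Finset (Fin n) := Finset.univ.filter (fun j => 0 < u j) with hs
    refine ⟨s.image (fun j => u j • m j), fun _ => 1, ?_, ?_⟩
    · intro x hx
      simp only [Finset.coe_image, Set.mem_image, Finset.mem_coe, hs,
        Finset.mem_filter] at hx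
      obtain ⟨j, ⟨-, hj⟩, rfl⟩ := hx
      exact extremal_smul hK (ne_of_gt hj) (hext j hj)
    · funext i
      rw [show ((s.image (fun j => u j • m j)).sup (fun x => (1:ℝ≥0) • x)) =
          s.sup (fun j => u j • m j) by
        rw [Finset.sup_image]; congr 1; funext x; simp]
      rw [Finset.sup_apply]
      apply le_antisymm
      · rcases eq_or_lt_of_le (zero_le (a := u i)) with h0 | h0
        · rw [← h0]; exact zero_le
        · have hi : i ∈ s := by simp [hs, h0]
          have : u i • m i ≤ s.sup (fun j => u j • m j) := Finset.le_sup (f := fun j => u j • m j) hi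
          calc u i = u i * m i i := by rw [hmj i h0, mul_one]
            _ = (u i • m i) i := rfl
            _ ≤ (s.sup fun j => u j • m j) i := this i
            _ = s.sup fun a => (u a • m a) i := Finset.sup_apply s _ i
      · apply Finset.sup_le
        intro j hj
        have hj' : 0 < u j := by simpa [hs] using hj
        have : u j • m j i ≤ u j * ((u j)⁻¹ * u i) :=
          mul_le_mul_right (hmle j hj' i) _
        calc (u j • m j) i = u j * m j i := rfl
          _ ≤ u j * ((u j)⁻¹ * u i) := this
          _ = u i := by rw [← mul_assoc, mul_inv_cancel₀ (ne_of_gt hj'), one_mul]
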